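/- For all $h, r \in \mathbb{C}$ and $n \geq 1$, the generalized Stirling numbers satisfy $S(n,0;h,r) = (r \mid h)_n$, and for $1 \leq k \leq n$, $S(n,k;h,r) = \sum_{j=0}^{n-k} \binom{n}{j} (-h)^{n-j-k} L(n-j,k)\,(r \mid h)_j$, where $L(m,k) = \binom{m-1}{k-1}\frac{m!}{k!}$ are the unsigned Lah numbers. -/

import Mathlib

open Finset Polynomial

/-- The generalized factorial with increment `h`: `(z ∣ h)_n = z(z-h)⋯(z-(n-1)h)`. -/
noncomputable def genFact (z h : ℂ) (n : ℕ) : ℂ := ∏ j ∈ Finset.range n, (z - j * h)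

/-- The unsigned Lah numbers `L(m,k) = C(m-1,k-1) m!/k!`. -/
noncomputable def lah (m k : ℕ) : ℂ := (Nat.choose (m - 1) (k - 1)) * m.factorial / k.factorial

lemma genFact_succ (z h : ℂ) (n : ℕ) : genFact z h (n+1) = genFact z h n * (z - n*h) := by
  simp [genFact, Finset.prod_range_succ]

noncomputable def L' : ℕ → ℕ → ℂ
  | 0, 0 => 1
  | 0, _+1 => 0
  | _+1, 0 => 0
  | m+1, k+1 => L' m k + (m + k + 1) * L' m (k+1)

lemma L'_zero_of_lt : ∀ m k : ℕ, m < k → L' m k = 0 := by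
  intro m
  induction m with
  | zero => intro k hk; cases k with
    | zero => omega
    | succ k => rfl
  | succ m ih =>
    intro k hk
    cases k with
    | zero => omega
    | succ k =>
      show L' m k + (m + k + 1) * L' m (k+1) = 0
      rw [ih k (by omega), ih (k+1) (by omega)]
      ring

lemma L'_succ_succ (m k : ℕ) : L' (m+1) (k+1) = L' m k + ((m:ℂ) + k + 1) * L' m (k+1) := rfl

lemma lahExpand (z h : ℂ) : ∀ m : ℕ,
    genFact z h m = ∑ k ∈ range (m+1), (-h)^(m-k) * L' m k * genFact z (-h) k := by
  intro m
  induction m with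
  | zero => simp [genFact, L']
  | succ m ih =>
    rw [genFact_succ, ih, Finset.sum_mul]
    have key : ∀ k ∈ range (m+1),
        (-h)^(m-k) * L' m k * genFact z (-h) k * (z - m*h)
          = (-h)^(m-k) * L' m k * genFact z (-h) (k+1)
            - ((m+k : ℕ) : ℂ) * h * ((-h)^(m-k) * L' m k * genFact z (-h) k) := by
      intro k hk
      have : (z - m*h) = (z - k*(-h)) - ((m+k : ℕ) : ℂ) * h := by push_cast; ring
      rw [this, genFact_succ]
      ring
    rw [Finset.sum_congr rfl key, Finset.sum_sub_distrib]
    -- first sum: reindex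
    have e1 : ∑ k ∈ range (m+1), (-h)^(m-k) * L' m k * genFact z (-h) (k+1)
        = ∑ k ∈ range (m+2), (fun k => if k = 0 then 0 else (-h)^(m-(k-1)) * L' m (k-1) * genFact z (-h) k) k := by
      rw [Finset.sum_range_succ' (fun k => if k = 0 then (0:ℂ) else (-h)^(m-(k-1)) * L' m (k-1) * genFact z (-h) k) (m+1)]
      simp
    rw [e1]
    -- second sum: extend to range (m+2)
    have e2 : ∑ k ∈ range (m+1), ((m+k : ℕ) : ℂ) * h * ((-h)^(m-k) * L' m k * genFact z (-h) k)
        = ∑ k ∈ range (m+2), ((m+k : ℕ) : ℂ) * h * ((-h)^(m-k) * L' m k * genFact z (-h) k) := by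
      symm
      rw [Finset.sum_range_succ, L'_zero_of_lt m (m+1) (by omega)]
      simp
    rw [e2, ← Finset.sum_sub_distrib]
    apply Finset.sum_congr rfl
    intro k hk
    simp only [mem_range] at hk
    cases k with
    | zero =>
      simp only [if_pos rfl]
      symm
      show (-h)^(m+1-0) * L' (m+1) 0 * genFact z (-h) 0 = _
      cases m with
      | zero => simp [L']
      | succ m =>
        show (-h)^(m+2) * L' (m+2) 0 * genFact z (-h) 0 = 0 - ((m+1+0 : ℕ) : ℂ) * h * ((-h)^(m+1-0) * L' (m+1) 0 * genFact z (-h) 0)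
        show (-h)^(m+2) * (0:ℂ) * genFact z (-h) 0 = 0 - ((m+1+0 : ℕ) : ℂ) * h * ((-h)^(m+1-0) * (0:ℂ) * genFact z (-h) 0)
        ring
    | succ k =>
      simp only [Nat.succ_ne_zero, if_neg, Nat.add_sub_cancel, if_false]
      symm
      rw [Nat.succ_sub_succ m k, L'_succ_succ]
      rcases lt_or_ge k m with hlt | hge
      · have hp : (-h)^(m-k) = (-h) * (-h)^(m-(k+1)) := by
          rw [← pow_succ']
          congr 1
          omega
        rw [hp]
        push_cast
        ring
      · -- k ≥ m, and k + 1 < m + 2 so k ≤ m, hence k = m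
        have hk' : k = m := by omega
        subst hk'
        rw [L'_zero_of_lt k (k+1) (by omega)]
        simp

lemma vander (z r h : ℂ) : ∀ n : ℕ,
    genFact (z+r) h n = ∑ j ∈ range (n+1),
      (n.choose j : ℂ) * genFact r h j * genFact z h (n-j) := by
  intro n
  induction n with
  | zero => simp [genFact]
  | succ n ih =>
    rw [genFact_succ, ih, Finset.sum_mul]
    have key : ∀ j ∈ range (n+1),
        (n.choose j : ℂ) * genFact r h j * genFact z h (n-j) * (z + r - n*h)
          = (n.choose j : ℂ) * genFact r h j * genFact z h (n-j+1)
            + (n.choose j : ℂ) * genFact r h (j+1) * genFact z h (n-j) := by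
      intro j hj
      simp only [mem_range] at hj
      have hnj : ((n - j : ℕ) : ℂ) = (n : ℂ) - (j : ℂ) := by
        have : j ≤ n := by omega
        push_cast [this]; ring
      have : (z + r - n*h) = (z - ((n-j : ℕ):ℂ)*h) + (r - j*h) := by rw [hnj]; ring
      rw [this, mul_add, genFact_succ z h (n-j), genFact_succ r h j]
      ring
    rw [Finset.sum_congr rfl key, Finset.sum_add_distrib]
    -- S1 = ∑_{j in range(n+1)} C(n,j) R j Z (n-j+1)
    -- S2 = ∑_{j in range(n+1)} C(n,j) R (j+1) Z (n-j)
    -- target T = ∑_{j in range(n+2)} C(n+1,j) R j Z (n+1-j)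
    have hT : ∑ j ∈ range (n+2), ((n+1).choose j : ℂ) * genFact r h j * genFact z h (n+1-j)
        = (∑ j ∈ range (n+1), ((n.choose j : ℂ) + (n.choose (j+1) : ℂ)) * genFact r h (j+1) * genFact z h (n-j))
          + genFact z h (n+1) := by
      rw [Finset.sum_range_succ' (fun j => ((n+1).choose j : ℂ) * genFact r h j * genFact z h (n+1-j)) (n+1)]
      simp only [Nat.choose_succ_succ, Nat.cast_add, Nat.succ_sub_succ]
      simp [genFact]
    rw [hT]
    have hS1 : ∑ j ∈ range (n+1), (n.choose j : ℂ) * genFact r h j * genFact z h (n-j+1)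
        = (∑ j ∈ range (n+1), (n.choose (j+1) : ℂ) * genFact r h (j+1) * genFact z h (n-j))
          + genFact z h (n+1) := by
      rw [Finset.sum_range_succ' (fun j => (n.choose j : ℂ) * genFact r h j * genFact z h (n-j+1)) n,
        Finset.sum_range_succ (fun j => (n.choose (j+1) : ℂ) * genFact r h (j+1) * genFact z h (n-j)) n]
      have last : (n.choose (n+1) : ℂ) = 0 := by
        rw [Nat.choose_eq_zero_of_lt (by omega)]; simp
      rw [last]
      have congrs : ∀ j ∈ range n,
          (n.choose (j+1) : ℂ) * genFact r h (j+1) * genFact z h (n-(j+1)+1)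
            = (n.choose (j+1) : ℂ) * genFact r h (j+1) * genFact z h (n-j) := by
        intro j hj
        simp only [mem_range] at hj
        congr 2
        omega
      rw [Finset.sum_congr rfl congrs]
      simp [genFact]
    rw [hS1]
    have : ∀ j ∈ range (n+1),
        ((n.choose (j+1) : ℂ) * genFact r h (j+1) * genFact z h (n-j)
          + (n.choose j : ℂ) * genFact r h (j+1) * genFact z h (n-j))
        = ((n.choose j : ℂ) + (n.choose (j+1) : ℂ)) * genFact r h (j+1) * genFact z h (n-j) := by
      intro j _; ring
    rw [add_right_comm, ← Finset.sum_add_distrib, Finset.sum_congr rfl this]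

noncomputable def gP (h : ℂ) (k : ℕ) : Polynomial ℂ := ∏ j ∈ range k, (X - C ((j:ℂ) * h))

lemma gP_eval (z h : ℂ) (k : ℕ) : (gP h k).eval z = genFact z h k := by
  simp [gP, genFact, eval_prod]

lemma gP_monic (h : ℂ) (k : ℕ) : (gP h k).Monic :=
  monic_prod_of_monic _ _ (fun j _ => monic_X_sub_C _)

lemma gP_natDegree (h : ℂ) (k : ℕ) : (gP h k).natDegree = k := by
  rw [gP, natDegree_prod _ _ (fun j _ => (monic_X_sub_C _).ne_zero)]
  simp only [natDegree_X_sub_C]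
  simp

lemma uniq (h : ℂ) : ∀ n : ℕ, ∀ a : ℕ → ℂ,
    (∀ z : ℂ, ∑ k ∈ range (n+1), a k * genFact z (-h) k = 0) → ∀ k ≤ n, a k = 0 := by
  intro n
  induction n with
  | zero =>
    intro a ha k hk
    interval_cases k
    have := ha 0
    simpa [genFact] using this
  | succ n ih =>
    intro a ha
    have hq : (∑ k ∈ range (n+2), C (a k) * gP (-h) k) = 0 := by
      apply Polynomial.funext
      intro z
      simp only [eval_finset_sum, eval_mul, eval_C, gP_eval, eval_zero]
      exact ha z
    have htop : a (n+1) = 0 := by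
      have hc := congrArg (fun p => Polynomial.coeff p (n+1)) hq
      simp only [finset_sum_coeff, coeff_zero, coeff_C_mul] at hc
      rw [Finset.sum_range_succ] at hc
      have hz : ∀ k ∈ range (n+1), a k * (gP (-h) k).coeff (n+1) = 0 := by
        intro k hk
        simp only [mem_range] at hk
        rw [coeff_eq_zero_of_natDegree_lt (by rw [gP_natDegree]; omega)]
        ring
      rw [Finset.sum_congr rfl hz] at hc
      have : (gP (-h) (n+1)).coeff (n+1) = 1 := by
        have := (gP_monic (-h) (n+1)).coeff_natDegree
        rwa [gP_natDegree] at this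
      rw [this] at hc
      simpa using hc
    have ha' : ∀ z : ℂ, ∑ k ∈ range (n+1), a k * genFact z (-h) k = 0 := by
      intro z
      have := ha z
      rw [Finset.sum_range_succ, htop] at this
      simpa using this
    intro k hk
    rcases Nat.lt_or_ge k (n+1) with hlt | hge
    · exact ih a ha' k (by omega)
    · have : k = n+1 := by omega
      rw [this]; exact htop

lemma L'_key : ∀ m k : ℕ, 1 ≤ k → k ≤ m →
    L' m k * (k.factorial : ℂ) = ((m-1).choose (k-1) : ℂ) * (m.factorial : ℂ) := by
  intro m
  induction m with
  | zero => intro k h1 h2; omega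
  | succ m ih =>
    intro k h1 h2
    cases k with
    | zero => omega
    | succ k =>
      rw [L'_succ_succ]
      cases k with
      | zero =>
        -- k = 1
        cases m with
        | zero => simp [L']
        | succ m' =>
          have hL0 : L' (m'+1) 0 = 0 := rfl
          have ih1 := ih 1 le_rfl (by omega)
          simp only [show (1:ℕ)-1 = 0 from rfl, Nat.choose_zero_right, Nat.cast_one,
            one_mul, Nat.factorial_one, mul_one, Nat.add_sub_cancel] at ih1
          rw [hL0, ih1]
          simp only [Nat.add_sub_cancel, Nat.choose_zero_right, Nat.cast_one]
          push_cast [Nat.factorial_succ (m'+1), Nat.factorial_one]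
          ring
      | succ k' =>
        simp only [show k'+1+1 = k'+2 from rfl, show m+1-1 = m from rfl,
          show k'+2-1 = k'+1 from rfl]
        rcases Nat.lt_or_ge (k'+2) (m+1) with hlt | hge
        · -- k'+2 ≤ m
          have ih1 := ih (k'+1) (by omega) (by omega)
          have ih2 := ih (k'+2) (by omega) (by omega)
          simp only [Nat.add_sub_cancel, show k'+2-1 = k'+1 from rfl] at ih1 ih2
          have hpascal : (m).choose (k'+1) = (m-1).choose k' + (m-1).choose (k'+1) := by
            have hm : m = (m-1)+1 := by omega
            rw [hm, Nat.choose_succ_succ]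
            congr 1 <;> omega
          have hright : (m-1).choose (k'+1) * (k'+1) = (m-1).choose k' * (m - 1 - k') := by
            exact Nat.choose_succ_right_eq (m-1) k'
          have h3 : ((m-1-k' : ℕ) : ℂ) = (m:ℂ) - 1 - (k':ℂ) := by
            push_cast [Nat.cast_sub (show k' ≤ m - 1 by omega),
              Nat.cast_sub (show 1 ≤ m by omega)]
            ring
          have hc1 : ((m-1).choose (k'+1) : ℂ) * ((k':ℂ)+1)
              = ((m-1).choose k' : ℂ) * ((m:ℂ) - 1 - (k':ℂ)) := by
            have hcast := congrArg (Nat.cast : ℕ → ℂ) hright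
            push_cast at hcast
            rw [h3] at hcast
            exact hcast
          have hc2 : ((m).choose (k'+1) : ℂ) = ((m-1).choose k' : ℂ) + ((m-1).choose (k'+1) : ℂ) := by
            exact_mod_cast congrArg (Nat.cast : ℕ → ℂ) hpascal
          have hfact : ((k'+2).factorial : ℂ) = ((k':ℂ)+2) * ((k'+1).factorial : ℂ) := by
            push_cast [Nat.factorial_succ (k'+1)]
            ring
          have hfactm : (((m+1)).factorial : ℂ) = ((m:ℂ)+1) * (m.factorial : ℂ) := by
            push_cast [Nat.factorial_succ m]
            ring
          rw [hfact, hfactm, hc2]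
          have e1 : L' m (k'+1) * (((k':ℂ)+2) * ((k'+1).factorial : ℂ))
              = ((k':ℂ)+2) * (((m-1).choose k' : ℂ) * (m.factorial : ℂ)) := by
            rw [← ih1]; ring
          have e2 : L' m (k'+2) * (((k':ℂ)+2) * ((k'+1).factorial : ℂ))
              = ((m-1).choose (k'+1) : ℂ) * (m.factorial : ℂ) := by
            rw [← hfact, ih2]
          push_cast
          linear_combination e1 + ((m:ℂ) + (k':ℂ) + 2) * e2 + (m.factorial : ℂ) * hc1
        · -- k'+2 = m+1, i.e. k'+1 = m
          have hk : k'+1 = m := by omega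
          subst hk
          rw [L'_zero_of_lt (k'+1) (k'+2) (by omega)]
          have ih1 := ih (k'+1) (by omega) (by omega)
          simp only [Nat.add_sub_cancel] at ih1
          have hfne : ((k'+1).factorial : ℂ) ≠ 0 :=
            Nat.cast_ne_zero.mpr (Nat.factorial_ne_zero _)
          have hLL : L' (k'+1) (k'+1) = 1 := by
            have hch : ((k').choose k' : ℂ) = 1 := by simp
            rw [hch, one_mul] at ih1
            exact mul_right_cancel₀ hfne (by rw [ih1, one_mul])
          rw [hLL]
          simp

lemma L'_eq_lah (m k : ℕ) (h1 : 1 ≤ k) (h2 : k ≤ m) : L' m k = lah m k := by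
  have hkey := L'_key m k h1 h2
  have hfne : ((k).factorial : ℂ) ≠ 0 := Nat.cast_ne_zero.mpr (Nat.factorial_ne_zero _)
  rw [lah, eq_div_iff hfne]
  exact hkey

theorem stmt_3 (h r : ℂ) (Sg : ℕ → ℕ → ℂ)
    (hSg : ∀ n : ℕ, ∀ z : ℂ,
      genFact (z + r) h n = ∑ k ∈ Finset.range (n + 1), Sg n k * genFact z (-h) k)
    (n : ℕ) (hn : 1 ≤ n) :
    Sg n 0 = genFact r h n ∧
    ∀ k, 1 ≤ k → k ≤ n →
      Sg n k = ∑ j ∈ Finset.range (n - k + 1),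
        (Nat.choose n j) * (-h) ^ (n - j - k) * lah (n - j) k * genFact r h j := by
  set A : ℕ → ℂ := fun k =>
    ∑ j ∈ range (n+1), (n.choose j : ℂ) * (-h)^(n-j-k) * L' (n-j) k * genFact r h j with hA
  have step1 : ∀ z : ℂ, genFact (z+r) h n = ∑ k ∈ range (n+1), A k * genFact z (-h) k := by
    intro z
    rw [vander z r h n]
    have inner : ∀ j ∈ range (n+1),
        (n.choose j : ℂ) * genFact r h j * genFact z h (n-j)
          = ∑ k ∈ range (n+1), (n.choose j : ℂ) * (-h)^(n-j-k) * L' (n-j) k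
              * genFact r h j * genFact z (-h) k := by
      intro j hj
      simp only [mem_range] at hj
      rw [lahExpand z h (n-j)]
      have hext : ∑ k ∈ range (n-j+1), (-h)^(n-j-k) * L' (n-j) k * genFact z (-h) k
          = ∑ k ∈ range (n+1), (-h)^(n-j-k) * L' (n-j) k * genFact z (-h) k := by
        apply Finset.sum_subset
        · intro x hx
          simp only [mem_range] at hx ⊢
          omega
        · intro x _ hx
          simp only [mem_range, not_lt] at hx
          rw [L'_zero_of_lt (n-j) x (by omega)]
          ring
      rw [hext, Finset.mul_sum]
      apply Finset.sum_congr rfl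
      intro k _
      ring
    rw [Finset.sum_congr rfl inner, Finset.sum_comm]
    apply Finset.sum_congr rfl
    intro k _
    rw [hA, Finset.sum_mul]
  have huniq : ∀ k ≤ n, Sg n k = A k := by
    have hz : ∀ z : ℂ, ∑ k ∈ range (n+1), (Sg n k - A k) * genFact z (-h) k = 0 := by
      intro z
      have h1 := hSg n z
      have h2 := step1 z
      have : ∑ k ∈ range (n+1), Sg n k * genFact z (-h) k
          = ∑ k ∈ range (n+1), A k * genFact z (-h) k := by rw [← h1, ← h2]
      calc ∑ k ∈ range (n+1), (Sg n k - A k) * genFact z (-h) k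
          = ∑ k ∈ range (n+1), (Sg n k * genFact z (-h) k - A k * genFact z (-h) k) := by
            apply Finset.sum_congr rfl; intro k _; ring
        _ = 0 := by rw [Finset.sum_sub_distrib, this, sub_self]
    intro k hk
    have := uniq h n (fun k => Sg n k - A k) hz k hk
    exact sub_eq_zero.mp this
  constructor
  · rw [huniq 0 (by omega)]
    show (∑ j ∈ range (n+1), (n.choose j : ℂ) * (-h)^(n-j-0) * L' (n-j) 0 * genFact r h j)
      = genFact r h n
    rw [Finset.sum_eq_single_of_mem n (by simp)]
    · simp [L']
    · intro j hj hjne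
      simp only [mem_range] at hj
      obtain ⟨t, ht⟩ : ∃ t, n - j = t + 1 := ⟨n - j - 1, by omega⟩
      rw [ht]
      show (n.choose j : ℂ) * (-h)^(t+1-0) * L' (t+1) 0 * genFact r h j = 0
      show (n.choose j : ℂ) * (-h)^(t+1-0) * 0 * genFact r h j = 0
      ring
  · intro k hk1 hk2
    rw [huniq k hk2]
    show (∑ j ∈ range (n+1), (n.choose j : ℂ) * (-h)^(n-j-k) * L' (n-j) k * genFact r h j)
      = _
    have htrim : ∑ j ∈ range (n+1), (n.choose j : ℂ) * (-h)^(n-j-k) * L' (n-j) k * genFact r h j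
        = ∑ j ∈ range (n-k+1), (n.choose j : ℂ) * (-h)^(n-j-k) * L' (n-j) k * genFact r h j := by
      symm
      apply Finset.sum_subset
      · intro x hx
        simp only [mem_range] at hx ⊢
        omega
      · intro x hx hx'
        simp only [mem_range, not_lt] at hx hx'
        rw [L'_zero_of_lt (n-x) k (by omega)]
        ring
    rw [htrim]
    apply Finset.sum_congr rfl
    intro j hj
    simp only [mem_range] at hj
    rw [L'_eq_lah (n-j) k hk1 (by omega)]
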